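/- arXiv:1512.08479 — 4 statements merged into one kernel-verified Lean document; each statement's English description precedes it below -/
import Mathlib

section
/- Let Γ be a locally finite connected graph with automorphism group G, and for vertices x, y let G_x denote the stabilizer of x. Then the ratio Δ(x,y) = |G_x·y| / |G_y·x| (cardinality of the orbit of y under G_x divided by cardinality of the orbit of x under G_y) satisfies the multiplicative cocycle identity: Δ(x,y)·Δ(y,z) = Δ(x,z) for all vertices x, y, z. -/
/-- The orbit of the vertex `y` under the stabilizer of the vertex `x`
in the automorphism group of the graph `Γ`. -/
def stabOrbit {V : Type*} (Γ : SimpleGraph V) (x y : V) : Set V :=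
  {z | ∃ g : Γ ≃g Γ, g x = x ∧ g y = z}

/-- The modular cocycle `Δ_Γ(x,y) = |G_x·y| / |G_y·x|` of a graph `Γ`. -/
noncomputable def modularCocycle {V : Type*} (Γ : SimpleGraph V) (x y : V) : ℝ :=
  (Nat.card (stabOrbit Γ x y) : ℝ) / (Nat.card (stabOrbit Γ y x) : ℝ)

namespace ModularCocycleAux

variable {V : Type*} {Γ : SimpleGraph V}

instance : MulAction (Γ ≃g Γ) V where
  smul g v := g v
  one_smul _ := rfl
  mul_smul _ _ _ := rfl

open MulAction Subgroup

theorem stabOrbit_eq (x y : V) :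
    stabOrbit Γ x y = MulAction.orbit (MulAction.stabilizer (Γ ≃g Γ) x) y := by
  ext z
  constructor
  · rintro ⟨g, hg, rfl⟩
    exact ⟨⟨g, hg⟩, rfl⟩
  · rintro ⟨⟨g, hg⟩, rfl⟩
    exact ⟨g, hg, rfl⟩

theorem card_stabOrbit (x y : V) :
    Nat.card (stabOrbit Γ x y) =
      (stabilizer (Γ ≃g Γ) y).relIndex (stabilizer (Γ ≃g Γ) x) := by
  rw [stabOrbit_eq]
  have h1 : stabilizer (stabilizer (Γ ≃g Γ) x) y =
      (stabilizer (Γ ≃g Γ) y).subgroupOf (stabilizer (Γ ≃g Γ) x) := by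
    ext ⟨g, hg⟩
    simp [mem_stabilizer_iff, Subgroup.mem_subgroupOf, Subgroup.smul_def]
  rw [Subgroup.relIndex, ← h1, Subgroup.index,
    Nat.card_congr (orbitEquivQuotientStabilizer (stabilizer (Γ ≃g Γ) x) y)]

theorem iso_dist (hconn : Γ.Connected) (g : Γ ≃g Γ) (a b : V) :
    Γ.dist (g a) (g b) = Γ.dist a b := by
  have key : ∀ (h : Γ ≃g Γ) (a b : V), Γ.dist (h a) (h b) ≤ Γ.dist a b := by
    intro h a b
    obtain ⟨p, hp⟩ := (hconn a b).exists_walk_length_eq_dist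
    calc Γ.dist (h a) (h b) ≤ (p.map h.toHom).length := SimpleGraph.dist_le _
    _ = Γ.dist a b := by rw [SimpleGraph.Walk.length_map, hp]
  refine le_antisymm (key g a b) ?_
  have := key g.symm (g a) (g b)
  simpa using this

theorem exists_nbr {x z : V} {n : ℕ} (q : Γ.Walk z x) (hq : q.length = n + 1) :
    ∃ w, Γ.Adj w z ∧ Γ.dist x w ≤ n := by
  cases q with
  | nil => simp at hq
  | cons h' q' =>
    refine ⟨_, h'.symm, ?_⟩
    rw [SimpleGraph.dist_comm]
    refine le_trans (SimpleGraph.dist_le q') ?_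
    simp only [SimpleGraph.Walk.length_cons] at hq
    omega

theorem ball_finite (hconn : Γ.Connected) [∀ v, Fintype (Γ.neighborSet v)] (x : V) :
    ∀ n : ℕ, {z | Γ.dist x z ≤ n}.Finite := by
  intro n
  induction n with
  | zero =>
    refine Set.Finite.subset (Set.finite_singleton x) ?_
    intro z hz
    simp only [Set.mem_setOf_eq, Nat.le_zero] at hz
    rw [hconn.dist_eq_zero_iff] at hz
    simp [hz]
  | succ n ih =>
    refine Set.Finite.subset (ih.union (Set.Finite.biUnion ih
      (fun w _ => (Γ.neighborSet w).toFinite))) ?_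
    intro z hz
    simp only [Set.mem_setOf_eq] at hz
    rcases Nat.lt_succ_iff_lt_or_eq.mp (Nat.lt_succ_of_le hz) with h | h
    · exact Or.inl (Nat.lt_succ_iff.mp h)
    · obtain ⟨p, hp⟩ := (hconn x z).exists_walk_length_eq_dist
      obtain ⟨w, hw, hwd⟩ := exists_nbr p.reverse (by rw [SimpleGraph.Walk.length_reverse, hp, h])
      exact Or.inr (Set.mem_biUnion hwd hw)

theorem card_stabOrbit_ne_zero (hconn : Γ.Connected) [∀ v, Fintype (Γ.neighborSet v)]
    (x y : V) : Nat.card (stabOrbit Γ x y) ≠ 0 := by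
  rw [Nat.card_ne_zero]
  constructor
  · exact ⟨y, (1 : Γ ≃g Γ), rfl, rfl⟩
  · refine Set.Finite.to_subtype (Set.Finite.subset (ball_finite hconn x (Γ.dist x y)) ?_)
    rintro z ⟨g, hg, rfl⟩
    simp only [Set.mem_setOf_eq]
    have hxy : Γ.dist x (g y) = Γ.dist x y := by
      conv_lhs => rw [← hg]
      exact iso_dist hconn g x y
    exact hxy.le

theorem relindex_ne_zero (hconn : Γ.Connected) [∀ v, Fintype (Γ.neighborSet v)]
    (x y : V) :
    (stabilizer (Γ ≃g Γ) y).relIndex (stabilizer (Γ ≃g Γ) x) ≠ 0 := by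
  rw [← card_stabOrbit]
  exact card_stabOrbit_ne_zero hconn x y

/-- Key algebraic step: ratio of relindexes expressed via a common finite-index subgroup. -/
theorem key {G : Type*} [Group G] (D A B : Subgroup G) (hDA : D ≤ A) (hDB : D ≤ B)
    (hA : D.relIndex A ≠ 0) (hB : D.relIndex B ≠ 0) :
    ((B.relIndex A : ℝ)) / (A.relIndex B : ℝ) = (D.relIndex A : ℝ) / (D.relIndex B : ℝ) := by
  have h1 : D.relIndex (A ⊓ B) * (A ⊓ B).relIndex A = D.relIndex A :=
    Subgroup.relIndex_mul_relIndex D (A ⊓ B) A (le_inf hDA hDB) inf_le_left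
  have h2 : D.relIndex (A ⊓ B) * (A ⊓ B).relIndex B = D.relIndex B :=
    Subgroup.relIndex_mul_relIndex D (A ⊓ B) B (le_inf hDA hDB) inf_le_right
  rw [Subgroup.inf_relIndex_left] at h1
  rw [Subgroup.inf_relIndex_right] at h2
  have hm : D.relIndex (A ⊓ B) ≠ 0 := fun h => hA (by rw [← h1, h, zero_mul])
  have hAB : A.relIndex B ≠ 0 := fun h => hB (by rw [← h2, h, mul_zero])
  rw [← h1, ← h2]
  push_cast
  rw [mul_div_mul_left _ _ (by exact_mod_cast hm)]

end ModularCocycleAux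

/-- For a locally finite connected graph `Γ`, the modular cocycle
`Δ(x,y) = |G_x·y|/|G_y·x|` satisfies the multiplicative cocycle identity. -/
theorem modularCocycle_mul {V : Type*} (Γ : SimpleGraph V)
    [∀ v, Fintype (Γ.neighborSet v)] (hconn : Γ.Connected) :
    ∀ x y z : V, modularCocycle Γ x y * modularCocycle Γ y z = modularCocycle Γ x z := by
  intro x y z
  open MulAction Subgroup ModularCocycleAux in
  · set S : V → Subgroup (Γ ≃g Γ) := fun v => stabilizer (Γ ≃g Γ) v with hS
    set D : Subgroup (Γ ≃g Γ) := S x ⊓ S y ⊓ S z with hD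
    have hrel : ∀ a b : V, (S b).relIndex (S a) ≠ 0 := fun a b =>
      relindex_ne_zero hconn a b
    have hDrel : ∀ a : V, D.relIndex (S a) ≠ 0 := by
      intro a
      refine Subgroup.relIndex_inf_ne_zero (Subgroup.relIndex_inf_ne_zero ?_ ?_) ?_
      · exact hrel a x
      · exact hrel a y
      · exact hrel a z
    have hDx : D ≤ S x := le_trans inf_le_left inf_le_left
    have hDy : D ≤ S y := le_trans inf_le_left inf_le_right
    have hDz : D ≤ S z := inf_le_right
    have hmc : ∀ (a b : V), D ≤ S a → D ≤ S b →
        modularCocycle Γ a b = (D.relIndex (S a) : ℝ) / (D.relIndex (S b) : ℝ) := by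
      intro a b ha hb
      rw [modularCocycle, card_stabOrbit, card_stabOrbit]
      exact key D (S a) (S b) ha hb (hDrel a) (hDrel b)
    rw [hmc x y hDx hDy, hmc y z hDy hDz, hmc x z hDx hDz]
    have h1 : (D.relIndex (S x) : ℝ) ≠ 0 := Nat.cast_ne_zero.mpr (hDrel x)
    have h2 : (D.relIndex (S y) : ℝ) ≠ 0 := Nat.cast_ne_zero.mpr (hDrel y)
    have h3 : (D.relIndex (S z) : ℝ) ≠ 0 := Nat.cast_ne_zero.mpr (hDrel z)
    field_simp
end

section
/- Let G be a locally compact group with left Haar measure m, acting continuously on a locally finite connected graph Γ by automorphisms with compact open stabilizers of positive finite Haar measure. Then the modular cocycle satisfies Δ(x,y) = m(G_x)/m(G_y) for all vertices x, y, where Δ(x,y) = card(G_x·y)/card(G_y·x). -/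
open MulAction MeasureTheory
open scoped ENNReal Pointwise

/-- If `K` is a compact subgroup and `H ≤ K` is an open subgroup, then
`m K = H.relIndex K * m H` for any left-invariant measure `m`. -/
lemma measure_eq_relIndex_mul {G : Type*} [Group G] [TopologicalSpace G]
    [IsTopologicalGroup G] [MeasurableSpace G] [BorelSpace G]
    (m : Measure G) [m.IsMulLeftInvariant] (K H : Subgroup G)
    (hK : IsCompact (K : Set G)) (hH : IsOpen (H : Set G)) (hHK : H ≤ K) :
    m (K : Set G) = (H.relIndex K : ℝ≥0∞) * m (H : Set G) := by
  haveI : CompactSpace K := isCompact_iff_compactSpace.mp hK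
  have hHK_open : IsOpen ((H.subgroupOf K : Subgroup K) : Set K) := by
    exact (hH.preimage continuous_subtype_val)
  haveI : Finite (K ⧸ H.subgroupOf K) :=
    Subgroup.quotient_finite_of_isOpen (H.subgroupOf K) hHK_open
  haveI : Fintype (K ⧸ H.subgroupOf K) := Fintype.ofFinite _
  set Q := K ⧸ H.subgroupOf K
  -- coset decomposition
  have hcover : (K : Set G) = ⋃ q : Q, ((Quotient.out q : K) : G) • (H : Set G) := by
    ext g
    constructor
    · intro hg
      refine Set.mem_iUnion.mpr ⟨(QuotientGroup.mk (⟨g, hg⟩ : K) : Q), ?_⟩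
      have h1 : (QuotientGroup.mk (Quotient.out (QuotientGroup.mk (⟨g, hg⟩ : K) : Q)) : Q)
          = QuotientGroup.mk (⟨g, hg⟩ : K) := QuotientGroup.out_eq' _
      have h3 : ((Quotient.out (QuotientGroup.mk (⟨g, hg⟩ : K) : Q))⁻¹ * ⟨g, hg⟩ : K) ∈
          H.subgroupOf K := QuotientGroup.eq.mp h1
      rw [Subgroup.mem_subgroupOf] at h3
      rw [Set.mem_smul_set_iff_inv_smul_mem]
      simpa using h3
    · intro hg
      obtain ⟨q, hq⟩ := Set.mem_iUnion.mp hg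
      obtain ⟨h, hh, rfl⟩ := hq
      exact K.mul_mem (Quotient.out q).2 (hHK hh)
  have hdisj : Pairwise (Function.onFun Disjoint
      fun q : Q => ((Quotient.out q : K) : G) • (H : Set G)) := by
    intro q1 q2 hne
    refine Set.disjoint_left.mpr fun g hg1 hg2 => hne ?_
    rw [Set.mem_smul_set_iff_inv_smul_mem] at hg1 hg2
    have h1 : ((Quotient.out q1 : K) : G)⁻¹ * g ∈ H := by simpa using hg1
    have h2 : g⁻¹ * ((Quotient.out q2 : K) : G) ∈ H := by
      have := H.inv_mem (show ((Quotient.out q2 : K) : G)⁻¹ * g ∈ H by simpa using hg2)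
      simpa [mul_inv_rev] using this
    have hmem : ((Quotient.out q1)⁻¹ * Quotient.out q2 : K) ∈ H.subgroupOf K := by
      rw [Subgroup.mem_subgroupOf]
      have heq : ((Quotient.out q1 : K) : G)⁻¹ * (Quotient.out q2 : K) =
          (((Quotient.out q1 : K) : G)⁻¹ * g) * (g⁻¹ * (Quotient.out q2 : K)) := by
        group
      rw [Subgroup.coe_mul, Subgroup.coe_inv, heq]
      exact H.mul_mem h1 h2
    have h4 : (QuotientGroup.mk (Quotient.out q1) : Q) = QuotientGroup.mk (Quotient.out q2) :=
      QuotientGroup.eq.mpr hmem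
    rwa [QuotientGroup.out_eq', QuotientGroup.out_eq'] at h4
  have hmeas : ∀ q : Q, MeasurableSet (((Quotient.out q : K) : G) • (H : Set G)) :=
    fun q => (hH.smul _).measurableSet
  rw [hcover, measure_iUnion hdisj hmeas]
  simp_rw [measure_smul]
  rw [tsum_fintype, Finset.sum_const, nsmul_eq_mul]
  congr 1
  rw [Finset.card_univ, Subgroup.relIndex, Subgroup.index, Nat.card_eq_fintype_card]

/-- For a locally compact group `G` with left Haar measure `m` acting continuously on a
locally finite connected graph `Γ` by automorphisms, with compact open stabilizers of
positive finite Haar measure, the modular cocycle satisfies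
`Δ(x,y) = card(G_x·y)/card(G_y·x) = m(G_x)/m(G_y)`. -/
theorem modularCocycle_eq_haar_ratio {G V : Type*} [Group G] [TopologicalSpace G]
    [IsTopologicalGroup G] [LocallyCompactSpace G] [MeasurableSpace G] [BorelSpace G]
    (m : Measure G) [m.IsHaarMeasure]
    (Γ : SimpleGraph V) [∀ v, Fintype (Γ.neighborSet v)] (hconn : Γ.Connected)
    [MulAction G V] [TopologicalSpace V] [DiscreteTopology V]
    (hcont : ∀ x : V, Continuous fun g : G => g • x)
    (haut : ∀ (g : G) (x y : V), Γ.Adj (g • x) (g • y) ↔ Γ.Adj x y)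
    (hcompact : ∀ x : V, IsCompact (MulAction.stabilizer G x : Set G))
    (hopen : ∀ x : V, IsOpen (MulAction.stabilizer G x : Set G))
    (hpos : ∀ x : V, 0 < m (MulAction.stabilizer G x : Set G))
    (hfin : ∀ x : V, m (MulAction.stabilizer G x : Set G) < ⊤)
    (x y : V) :
    (Nat.card (MulAction.orbit (MulAction.stabilizer G x) y) : ℝ≥0∞) /
        (Nat.card (MulAction.orbit (MulAction.stabilizer G y) x) : ℝ≥0∞) =
      m (MulAction.stabilizer G x : Set G) / m (MulAction.stabilizer G y : Set G) := by
  set K := MulAction.stabilizer G x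
  set L := MulAction.stabilizer G y
  set H : Subgroup G := K ⊓ L with hH
  have hHopen : IsOpen (H : Set G) := by
    have : (H : Set G) = (K : Set G) ∩ (L : Set G) := rfl
    rw [this]; exact (hopen x).inter (hopen y)
  -- orbit cardinalities equal relative indices
  have horb : ∀ (u v : V), MulAction.stabilizer (MulAction.stabilizer G u) v =
      (MulAction.stabilizer G v).subgroupOf (MulAction.stabilizer G u) := by
    intro u v
    ext g
    simp [Subgroup.mem_subgroupOf, MulAction.mem_stabilizer_iff]
    rfl
  have hcardx : (Nat.card (MulAction.orbit K y) : ℕ) = H.relIndex K := by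
    rw [hH, Subgroup.inf_relIndex_left]
    rw [Subgroup.relIndex, ← horb x y, MulAction.index_stabilizer]
    exact (Nat.card_coe_set_eq _).symm
  have hcardy : (Nat.card (MulAction.orbit L x) : ℕ) = H.relIndex L := by
    rw [hH, Subgroup.inf_relIndex_right]
    rw [Subgroup.relIndex, ← horb y x, MulAction.index_stabilizer]
    exact (Nat.card_coe_set_eq _).symm
  have hmK : m (K : Set G) = (Nat.card (MulAction.orbit K y) : ℝ≥0∞) * m (H : Set G) := by
    rw [measure_eq_relIndex_mul m K H (hcompact x) hHopen inf_le_left, hcardx]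
  have hmL : m (L : Set G) = (Nat.card (MulAction.orbit L x) : ℝ≥0∞) * m (H : Set G) := by
    rw [measure_eq_relIndex_mul m L H (hcompact y) hHopen inf_le_right, hcardy]
  have hHpos : m (H : Set G) ≠ 0 :=
    (hHopen.measure_ne_zero m ⟨1, H.one_mem⟩)
  have hHfin : m (H : Set G) ≠ ⊤ := by
    refine ne_top_of_le_ne_top (hfin x).ne (measure_mono ?_)
    exact Set.inter_subset_left
  rw [hmK, hmL, ENNReal.mul_div_mul_right _ _ hHpos hHfin]
end

section
/- For a vertex-transitive locally finite connected graph Γ with automorphism group G, and a fixed vertex x, the function g ↦ Δ(x, gx) on G equals the modular function of G, where Δ is the modular cocycle. In particular, G is unimodular if and only if Δ(x, gx) = 1 for all g ∈ G. -/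
open MulAction MeasureTheory
open scoped ENNReal

open Subgroup
open scoped Pointwise

lemma aux_quot_finite {G : Type*} [Group G] [TopologicalSpace G] [IsTopologicalGroup G]
    (H K : Subgroup G) (hHopen : IsOpen (H : Set G)) (hKcomp : IsCompact (K : Set G)) :
    Finite (K ⧸ H.subgroupOf K) := by
  have : CompactSpace K := isCompact_iff_compactSpace.mp hKcomp
  exact Subgroup.quotient_finite_of_isOpen _ (hHopen.preimage continuous_subtype_val)

lemma aux_measure_index {G : Type*} [Group G] [TopologicalSpace G] [IsTopologicalGroup G]
    [MeasurableSpace G] [BorelSpace G] (m : Measure G) [m.IsMulLeftInvariant]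
    (H K : Subgroup G) (hHK : H ≤ K) (hHopen : IsOpen (H : Set G))
    (hKcomp : IsCompact (K : Set G)) :
    m (K : Set G) = ((H.subgroupOf K).index : ℝ≥0∞) * m (H : Set G) := by
  have hfin : Finite (K ⧸ H.subgroupOf K) := aux_quot_finite H K hHopen hKcomp
  have hcount : Countable (K ⧸ H.subgroupOf K) := Finite.to_countable
  set c : (K ⧸ H.subgroupOf K) → G := fun q => ((Quotient.out q : K) : G) with hc
  have hunion : (K : Set G) = ⋃ q, c q • (H : Set G) := by
    ext k
    constructor
    · intro hk
      set q : K ⧸ H.subgroupOf K := QuotientGroup.mk (⟨k, hk⟩ : K) with hq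
      refine Set.mem_iUnion.2 ⟨q, ?_⟩
      have h1 : (QuotientGroup.mk (Quotient.out q) : K ⧸ H.subgroupOf K) = q :=
        QuotientGroup.out_eq' q
      rw [hq, QuotientGroup.eq] at h1
      rw [mem_subgroupOf] at h1
      refine ⟨_, h1, ?_⟩
      push_cast
      simp [c, hq, mul_assoc]
    · intro hk
      obtain ⟨q, hq⟩ := Set.mem_iUnion.1 hk
      obtain ⟨h, hh, rfl⟩ := hq
      exact K.mul_mem (Quotient.out q).2 (hHK hh)
  have hdisj : Pairwise (Function.onFun Disjoint (fun q => c q • (H : Set G))) := by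
    intro q q' hne
    rw [Function.onFun, Set.disjoint_left]
    rintro a ⟨h, hh, rfl⟩ ⟨h', hh', he⟩
    apply hne
    simp only [smul_eq_mul] at he
    have h3 : (c q)⁻¹ * c q' = h * h'⁻¹ := by
      rw [inv_mul_eq_iff_eq_mul, ← mul_assoc, eq_mul_inv_iff_mul_eq]
      exact he
    have h4 : (c q)⁻¹ * c q' ∈ H := h3 ▸ H.mul_mem hh (H.inv_mem hh')
    have h5 : (Quotient.out q)⁻¹ * Quotient.out q' ∈ H.subgroupOf K := by
      rw [mem_subgroupOf]; push_cast; exact h4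
    have h6 := (QuotientGroup.eq (s := H.subgroupOf K)).2 h5
    rwa [QuotientGroup.out_eq', QuotientGroup.out_eq'] at h6
  have hmeas : ∀ q, MeasurableSet (c q • (H : Set G)) :=
    fun q => (hHopen.smul (c q)).measurableSet
  rw [hunion, measure_iUnion hdisj hmeas]
  have hsm : ∀ q, m (c q • (H : Set G)) = m (H : Set G) :=
    fun q => measure_smul (μ := m) (c q) _
  simp_rw [hsm]
  have := Fintype.ofFinite (K ⧸ H.subgroupOf K)
  rw [tsum_eq_sum (s := Finset.univ) (by simp), Finset.sum_const, index, Nat.card_eq_fintype_card,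
    Finset.card_univ, nsmul_eq_mul]


/-- For a vertex-transitive locally finite connected graph with automorphism group `G`
(a locally compact group, with left Haar measure `m` and compact open stabilizers),
and a fixed vertex `x`, the function `g ↦ Δ(x, gx)` (where
`Δ(x,y) = card(G_x·y)/card(G_y·x)` is the modular cocycle) equals the modular function
`ΔG` of `G` (characterized by `m(Ag) = ΔG(g)·m(A)`).  In particular `G` is unimodular
iff `Δ(x, gx) = 1` for all `g`. -/
theorem modularCocycle_eq_modularFunction {G V : Type*} [Group G] [TopologicalSpace G]
    [IsTopologicalGroup G] [LocallyCompactSpace G] [MeasurableSpace G] [BorelSpace G]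
    (m : Measure G) [m.IsHaarMeasure]
    (Γ : SimpleGraph V) [∀ v, Fintype (Γ.neighborSet v)] (hconn : Γ.Connected)
    [MulAction G V]
    (haut : ∀ (g : G) (x y : V), Γ.Adj (g • x) (g • y) ↔ Γ.Adj x y)
    (htrans : ∀ x y : V, ∃ g : G, g • x = y)
    (hcompact : ∀ x : V, IsCompact (MulAction.stabilizer G x : Set G))
    (hopen : ∀ x : V, IsOpen (MulAction.stabilizer G x : Set G))
    (hpos : ∀ x : V, 0 < m (MulAction.stabilizer G x : Set G))
    (hfin : ∀ x : V, m (MulAction.stabilizer G x : Set G) < ⊤)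
    (ΔG : G → ℝ≥0∞)
    (hΔG : ∀ (g : G) (A : Set G), MeasurableSet A →
      m ((fun a => a * g) '' A) = ΔG g * m A)
    (x : V) :
    (∀ g : G,
      (Nat.card (MulAction.orbit (MulAction.stabilizer G x) (g • x)) : ℝ≥0∞) /
          (Nat.card (MulAction.orbit (MulAction.stabilizer G (g • x)) x) : ℝ≥0∞) =
        ΔG g) ∧
    ((∀ g : G, ΔG g = 1) ↔
      ∀ g : G,
        (Nat.card (MulAction.orbit (MulAction.stabilizer G x) (g • x)) : ℝ≥0∞) /
            (Nat.card (MulAction.orbit (MulAction.stabilizer G (g • x)) x) : ℝ≥0∞) =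
          1) := by
  have key : ∀ g : G,
      (Nat.card (orbit (stabilizer G x) (g • x)) : ℝ≥0∞) /
        (Nat.card (orbit (stabilizer G (g • x)) x) : ℝ≥0∞) = ΔG g := by
    intro g
    set K := stabilizer G x with hK
    set L := stabilizer G (g • x) with hL
    set H := K ⊓ L with hH
    have hKopen : IsOpen (K : Set G) := hopen x
    have hLopen : IsOpen (L : Set G) := hopen (g • x)
    have hHopen : IsOpen (H : Set G) := by
      rw [hH, Subgroup.coe_inf]; exact hKopen.inter hLopen
    -- orbit cardinalities as indices
    have hstab1 : stabilizer K (g • x) = H.subgroupOf K := by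
      rw [hH, inf_subgroupOf_left]
      ext k
      simp [mem_stabilizer_iff, Subgroup.mem_subgroupOf, hL, Subgroup.smul_def]
    have hstab2 : stabilizer L x = H.subgroupOf L := by
      rw [hH, inf_subgroupOf_right]
      ext k
      simp [mem_stabilizer_iff, Subgroup.mem_subgroupOf, hK, Subgroup.smul_def]
    have hcard1 : Nat.card (orbit K (g • x)) = (H.subgroupOf K).index := by
      rw [show (H.subgroupOf K).index = Nat.card (K ⧸ H.subgroupOf K) from rfl, ← hstab1]
      exact Nat.card_congr (orbitEquivQuotientStabilizer K (g • x))
    have hcard2 : Nat.card (orbit L x) = (H.subgroupOf L).index := by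
      rw [show (H.subgroupOf L).index = Nat.card (L ⧸ H.subgroupOf L) from rfl, ← hstab2]
      exact Nat.card_congr (orbitEquivQuotientStabilizer L x)
    -- measures in terms of indices
    have hmK : m (K : Set G) = ((H.subgroupOf K).index : ℝ≥0∞) * m (H : Set G) :=
      aux_measure_index m H K inf_le_left hHopen (hcompact x)
    have hmL : m (L : Set G) = ((H.subgroupOf L).index : ℝ≥0∞) * m (H : Set G) :=
      aux_measure_index m H L inf_le_right hHopen (hcompact (g • x))
    -- m L = ΔG g⁻¹ * m K
    have himg : (L : Set G) = (fun a => a * g⁻¹) '' ((fun a => g * a) '' (K : Set G)) := by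
      rw [hL, hK, stabilizer_smul_eq_stabilizer_map_conj, Subgroup.coe_map, Set.image_image]
      congr 1
    have hopen1 : IsOpen ((fun a => g * a) '' (K : Set G)) :=
      (Homeomorph.mulLeft g).isOpen_image.2 hKopen
    have hm1 : m ((fun a => g * a) '' (K : Set G)) = m (K : Set G) := by
      have h : (fun a => g * a) '' (K : Set G) = g • (K : Set G) := by
        ext a
        simp only [Set.mem_smul_set, smul_eq_mul, Set.mem_image]
      rw [h, measure_smul]
    have hmL2 : m (L : Set G) = ΔG g⁻¹ * m (K : Set G) := by
      rw [himg, hΔG g⁻¹ _ hopen1.measurableSet, hm1]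
    -- cocycle identity ΔG g⁻¹ * ΔG g = 1
    have hopenKg : IsOpen ((fun a => a * g) '' (K : Set G)) :=
      (Homeomorph.mulRight g).isOpen_image.2 hKopen
    have hid : (fun a => a * g⁻¹) '' ((fun a => a * g) '' (K : Set G)) = (K : Set G) := by
      rw [Set.image_image]
      simp [mul_assoc]
    have hK0 : m (K : Set G) ≠ 0 := (hpos x).ne'
    have hKt : m (K : Set G) ≠ ⊤ := (hfin x).ne
    have hco : ΔG g⁻¹ * ΔG g = 1 := by
      have h2 := hΔG g⁻¹ _ hopenKg.measurableSet
      rw [hid, hΔG g _ hKopen.measurableSet, ← mul_assoc] at h2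
      nth_rewrite 1 [← one_mul (m (K : Set G))] at h2
      exact ((ENNReal.mul_left_inj hK0 hKt).1 h2).symm
    -- m K = ΔG g * m L
    have hmKL : m (K : Set G) = ΔG g * m (L : Set G) := by
      rw [hmL2, ← mul_assoc, mul_comm (ΔG g) (ΔG g⁻¹), hco, one_mul]
    -- cancel m H
    have hH0 : m (H : Set G) ≠ 0 :=
      (hHopen.measure_pos m ⟨1, H.one_mem⟩).ne'
    have hHt : m (H : Set G) ≠ ⊤ := by
      refine (lt_of_le_of_lt (measure_mono ?_) (hfin x)).ne
      rw [hH, Subgroup.coe_inf]; exact Set.inter_subset_left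
    have hn : ((H.subgroupOf K).index : ℝ≥0∞) = ΔG g * (H.subgroupOf L).index := by
      have h := hmKL
      rw [hmK, hmL, ← mul_assoc] at h
      exact (ENNReal.mul_left_inj hH0 hHt).1 h
    have hn2 : ((H.subgroupOf L).index : ℝ≥0∞) ≠ 0 := by
      intro h0
      rw [h0, zero_mul] at hmL
      exact (hpos (g • x)).ne' hmL
    have hn2t : ((H.subgroupOf L).index : ℝ≥0∞) ≠ ⊤ := ENNReal.natCast_ne_top _
    rw [hcard1, hcard2, eq_comm, ENNReal.eq_div_iff hn2 hn2t, mul_comm]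
    exact hn.symm
  exact ⟨key, by simp only [key]⟩
end

section
/- If the modular cocycle of a locally finite connected graph is identically 1 (i.e., the graph is unimodular in the sense that card(G_x·y) = card(G_y·x) for all vertices x, y), then the automorphism group G of the graph is a unimodular locally compact group. -/
open MulAction MeasureTheory Set
open scoped ENNReal NNReal

section Aux

variable {G V : Type*} [Group G] [MulAction G V]

lemma mem_stab_smul {a h : G} {x : V} :
    h ∈ stabilizer G (a • x) ↔ a⁻¹ * h * a ∈ stabilizer G x := by
  simp only [mem_stabilizer_iff]
  constructor
  · intro hh
    rw [mul_smul, mul_smul, hh, inv_smul_smul]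
  · intro hh
    have h2 : (a * (a⁻¹ * h * a)) • x = a • x := by rw [mul_smul, hh]
    have h3 : a * (a⁻¹ * h * a) = h * a := by group
    rw [h3, mul_smul] at h2
    exact h2

lemma mem_orbit_stab_iff {x w z : V} :
    z ∈ orbit (stabilizer G x) w ↔ ∃ h : G, h ∈ stabilizer G x ∧ h • w = z := by
  constructor
  · rintro ⟨u, rfl⟩
    exact ⟨(u : G), u.2, rfl⟩
  · rintro ⟨h, hh, rfl⟩
    exact ⟨⟨h, hh⟩, rfl⟩

lemma orbit_conj (a : G) (x : V) :
    orbit (stabilizer G (a • x)) x = (a • ·) '' orbit (stabilizer G x) (a⁻¹ • x) := by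
  ext z
  rw [mem_orbit_stab_iff, Set.mem_image]
  constructor
  · rintro ⟨h, hh, rfl⟩
    refine ⟨(a⁻¹ * h * a) • (a⁻¹ • x),
      mem_orbit_stab_iff.mpr ⟨a⁻¹ * h * a, mem_stab_smul.mp hh, rfl⟩, ?_⟩
    simp only [smul_smul]
    congr 1
    group
  · rintro ⟨z', hz', rfl⟩
    obtain ⟨h, hh, rfl⟩ := mem_orbit_stab_iff.mp hz'
    refine ⟨a * h * a⁻¹, mem_stabilizer_iff.mpr ?_, ?_⟩
    · have h1 : (a * h * a⁻¹) • a • x = (a * h) • x := by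
        rw [smul_smul]
        congr 1
        group
      rw [h1, mul_smul, mem_stabilizer_iff.mp hh]
    · simp only [smul_smul]
      congr 1
      group

lemma card_orbit_conj (a : G) (x : V) :
    Nat.card (orbit (stabilizer G (a • x)) x) =
      Nat.card (orbit (stabilizer G x) (a⁻¹ • x)) := by
  rw [orbit_conj a x]
  exact Nat.card_image_of_injective (MulAction.injective a) _

end Aux

section Meas

variable {G V : Type*} [Group G] [MulAction G V]
  [TopologicalSpace G] [IsTopologicalGroup G] [LocallyCompactSpace G]
  [MeasurableSpace G] [BorelSpace G]

/-- Key decomposition: the measure of a right translate of the stabilizer of `x` is the number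
of points in the orbit of `w` under the stabilizer, times the measure of the corresponding
translate of the intersection of the two stabilizers. -/
lemma measure_rt_decomp (m : Measure G) [m.IsMulLeftInvariant] (x w : V)
    (hox : IsOpen (stabilizer G x : Set G)) (how : IsOpen (stabilizer G w : Set G))
    (hfin : (orbit (stabilizer G x) w).Finite) (a : G) :
    m ((· * a) '' (stabilizer G x : Set G)) =
      (Nat.card (orbit (stabilizer G x) w)) *
        m ((· * a) '' ((stabilizer G x : Set G) ∩ (stabilizer G w : Set G))) := by
  classical
  set L : Set G := (stabilizer G x : Set G) ∩ (stabilizer G w : Set G) with hL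
  set T : Finset V := hfin.toFinset with hT
  set P : V → Set G := fun z => {h : G | h ∈ stabilizer G x ∧ h • w = z} with hP
  have cover : (stabilizer G x : Set G) = ⋃ z ∈ T, P z := by
    ext h
    simp only [Set.mem_iUnion, hT, Set.Finite.mem_toFinset, hP, Set.mem_setOf_eq,
      SetLike.mem_coe]
    constructor
    · intro hh
      exact ⟨h • w, mem_orbit_stab_iff.mpr ⟨h, hh, rfl⟩, hh, rfl⟩
    · rintro ⟨z, _, hh, _⟩
      exact hh
  -- each piece is a left translate of L
  have piece_eq : ∀ z ∈ T, ∃ k₀ : G, k₀ ∈ stabilizer G x ∧ P z = (k₀ * ·) '' L := by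
    intro z hz
    rw [hT, Set.Finite.mem_toFinset] at hz
    obtain ⟨k₀, hk₀, hk₀w⟩ := mem_orbit_stab_iff.mp hz
    refine ⟨k₀, hk₀, ?_⟩
    ext h
    simp only [hP, Set.mem_setOf_eq, Set.mem_image, hL, Set.mem_inter_iff, SetLike.mem_coe,
      mem_stabilizer_iff]
    constructor
    · rintro ⟨hh, hw⟩
      refine ⟨k₀⁻¹ * h, ⟨(stabilizer G x).mul_mem (inv_mem hk₀) hh, ?_⟩, by group⟩
      rw [mul_smul, hw, ← hk₀w, inv_smul_smul]
    · rintro ⟨l, ⟨hl, hlw⟩, rfl⟩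
      exact ⟨(stabilizer G x).mul_mem hk₀ hl, by rw [mul_smul, hlw, hk₀w]⟩
  have himage : (· * a) '' (stabilizer G x : Set G) = ⋃ z ∈ T, (· * a) '' P z := by
    rw [cover, Set.image_iUnion₂]
  have hdisj : (T : Set V).PairwiseDisjoint (fun z => (· * a) '' P z) := by
    intro z _ z' _ hne
    rw [Function.onFun, Set.disjoint_left]
    rintro h ⟨h₁, ⟨_, h₁w⟩, rfl⟩ ⟨h₂, ⟨_, h₂w⟩, hEq⟩
    have : h₂ = h₁ := mul_left_injective a hEq
    exact hne (by rw [← h₁w, ← h₂w, this])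
  have hmeas : ∀ z ∈ T, MeasurableSet ((· * a) '' P z) := by
    intro z hz
    obtain ⟨k₀, _, hPz⟩ := piece_eq z hz
    rw [hPz]
    exact ((isOpenMap_mul_right a) _ ((isOpenMap_mul_left k₀) _ (hox.inter how))).measurableSet
  have hval : ∀ z ∈ T, m ((· * a) '' P z) = m ((· * a) '' L) := by
    intro z hz
    obtain ⟨k₀, _, hPz⟩ := piece_eq z hz
    have hcomm : (· * a) '' ((k₀ * ·) '' L) = (k₀ * ·) '' ((· * a) '' L) := by
      rw [← Set.image_comp, ← Set.image_comp]
      congr 1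
      funext h
      simp [mul_assoc]
    rw [hPz, hcomm, Set.image_mul_left, measure_preimage_mul]
  rw [himage, measure_biUnion_finset hdisj hmeas, Finset.sum_congr rfl hval,
    Finset.sum_const, nsmul_eq_mul]
  congr 1
  rw [hT, Nat.card_coe_set_eq, Set.ncard_eq_toFinset_card _ hfin]

/-- The main translation invariance: `m (K a) = m K` for `K` the stabilizer of `x`. -/
lemma measure_image_mul_right_stab (m : Measure G) [m.IsMulLeftInvariant] (x : V)
    (hopen : ∀ y : V, IsOpen (stabilizer G y : Set G))
    (horbfin : ∀ x y : V, (orbit (stabilizer G x) y).Finite)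
    (huni : ∀ x y : V,
      Nat.card (orbit (stabilizer G x) y) = Nat.card (orbit (stabilizer G y) x))
    (a : G) :
    m ((· * a) '' (stabilizer G x : Set G)) = m (stabilizer G x : Set G) := by
  have h1 := measure_rt_decomp m x (a • x) (hopen x) (hopen (a • x)) (horbfin x (a • x)) a
  have h2 := measure_rt_decomp m x (a⁻¹ • x) (hopen x) (hopen (a⁻¹ • x))
    (horbfin x (a⁻¹ • x)) 1
  simp only [mul_one, Set.image_id'] at h2
  -- identify the two translates of intersections
  have h3 : (· * a) '' ((stabilizer G x : Set G) ∩ (stabilizer G (a • x) : Set G)) =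
      (a * ·) '' ((stabilizer G x : Set G) ∩ (stabilizer G (a⁻¹ • x) : Set G)) := by
    ext h
    simp only [Set.mem_image, Set.mem_inter_iff, SetLike.mem_coe]
    constructor
    · rintro ⟨h', ⟨hx', hw'⟩, rfl⟩
      refine ⟨a⁻¹ * h' * a, ⟨mem_stab_smul.mp hw', ?_⟩, by group⟩
      · have : x = a • (a⁻¹ • x) := (smul_inv_smul a x).symm
        rw [this] at hx'
        exact mem_stab_smul.mp hx'
    · rintro ⟨h', ⟨hx', hy'⟩, rfl⟩
      refine ⟨a * h' * a⁻¹, ⟨?_, ?_⟩, by group⟩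
      · have h5 := mem_stab_smul.mp hy'
        rwa [inv_inv] at h5
      · refine mem_stab_smul.mpr ?_
        rw [show a⁻¹ * (a * h' * a⁻¹) * a = h' by group]
        exact hx'
  have h4 : m ((a * ·) '' ((stabilizer G x : Set G) ∩ (stabilizer G (a⁻¹ • x) : Set G))) =
      m ((stabilizer G x : Set G) ∩ (stabilizer G (a⁻¹ • x) : Set G)) := by
    rw [Set.image_mul_left, measure_preimage_mul]
  have hcard : Nat.card (orbit (stabilizer G x) (a • x)) =
      Nat.card (orbit (stabilizer G x) (a⁻¹ • x)) := by
    rw [huni x (a • x), card_orbit_conj a x]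
  rw [h1, h3, h4, hcard, ← h2]

end Meas

/-- If the modular cocycle of a locally finite connected graph is identically `1`
(`card(G_x·y) = card(G_y·x)` for all vertices `x, y`), then the automorphism group
of the graph (a locally compact group with compact open vertex stabilizers) is
unimodular: any left Haar measure is also right invariant. -/
theorem unimodular_graph_implies_unimodular_group {G V : Type*} [Group G]
    [TopologicalSpace G] [IsTopologicalGroup G] [LocallyCompactSpace G]
    [MeasurableSpace G] [BorelSpace G]
    (m : Measure G) [m.IsHaarMeasure]
    (Γ : SimpleGraph V) [∀ v, Fintype (Γ.neighborSet v)] (hconn : Γ.Connected)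
    [MulAction G V]
    (haut : ∀ (g : G) (x y : V), Γ.Adj (g • x) (g • y) ↔ Γ.Adj x y)
    (hcompact : ∀ x : V, IsCompact (MulAction.stabilizer G x : Set G))
    (hopen : ∀ x : V, IsOpen (MulAction.stabilizer G x : Set G))
    (horbfin : ∀ x y : V, (MulAction.orbit (MulAction.stabilizer G x) y).Finite)
    (huni : ∀ x y : V,
      Nat.card (MulAction.orbit (MulAction.stabilizer G x) y) =
        Nat.card (MulAction.orbit (MulAction.stabilizer G y) x)) :
    m.IsMulRightInvariant := by
  classical
  haveI : Nonempty V := hconn.nonempty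
  obtain ⟨x⟩ : Nonempty V := hconn.nonempty
  -- V is countable
  have hcountV : Countable V := by
    set S : ℕ → Set V := fun n => {v | ∃ p : Γ.Walk x v, p.length ≤ n} with hS
    have hSfin : ∀ n, (S n).Finite := by
      intro n
      induction n with
      | zero =>
        apply Set.Finite.subset (Set.finite_singleton x)
        rintro v ⟨p, hp⟩
        have : p.length = 0 := Nat.le_zero.mp hp
        exact (SimpleGraph.Walk.eq_of_length_eq_zero this).symm
      | succ n ih =>
        apply Set.Finite.subset (ih.union (Set.Finite.biUnion ih
          (fun u _ => (Γ.neighborSet u).toFinite)))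
        rintro v ⟨p, hp⟩
        cases hrev : p.reverse with
        | nil =>
          exact Or.inl ⟨SimpleGraph.Walk.nil, Nat.zero_le n⟩
        | cons hadj q =>
          rename_i u
          have hq : q.reverse.length ≤ n := by
            have := congrArg SimpleGraph.Walk.length hrev
            rw [SimpleGraph.Walk.length_reverse, SimpleGraph.Walk.length_cons] at this
            rw [SimpleGraph.Walk.length_reverse]
            omega
          exact Or.inr (Set.mem_biUnion ⟨q.reverse, hq⟩ hadj.symm)
    have huniv : (Set.univ : Set V) = ⋃ n, S n := by
      ext v
      simp only [Set.mem_univ, Set.mem_iUnion, true_iff]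
      obtain ⟨p⟩ := hconn.preconnected x v
      exact ⟨p.length, p, le_refl _⟩
    rw [← Set.countable_univ_iff, huniv]
    exact Set.countable_iUnion fun n => (hSfin n).countable
  -- the fibers of the orbit map are compact open
  set C : V → Set G := fun y => {h : G | h • x = y} with hC
  have hCrep : ∀ y : V, C y = ∅ ∨ ∃ h₀ : G, C y = (h₀ * ·) '' (stabilizer G x : Set G) := by
    intro y
    by_cases hy : ∃ h₀ : G, h₀ • x = y
    · obtain ⟨h₀, hh₀⟩ := hy
      refine Or.inr ⟨h₀, ?_⟩
      ext h
      simp only [hC, Set.mem_setOf_eq, Set.mem_image, SetLike.mem_coe, mem_stabilizer_iff]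
      constructor
      · intro hh
        exact ⟨h₀⁻¹ * h, by rw [mul_smul, hh, ← hh₀, inv_smul_smul], by group⟩
      · rintro ⟨k, hk, rfl⟩
        rw [mul_smul, hk, hh₀]
    · left
      ext h
      simp only [hC, Set.mem_setOf_eq, Set.mem_empty_iff_false, iff_false]
      exact fun hh => hy ⟨h, hh⟩
    -- compactness, closedness, openness of fibers
  have hKclosed : IsClosed (stabilizer G x : Set G) :=
    Subgroup.isClosed_of_isOpen _ (hopen x)
  have hCcomp : ∀ y : V, IsCompact (C y) := by
    intro y
    rcases hCrep y with h | ⟨h₀, h⟩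
    · rw [h]; exact isCompact_empty
    · rw [h]; exact (hcompact x).image (continuous_mul_left h₀)
  have hCclosed : ∀ y : V, IsClosed (C y) := by
    intro y
    rcases hCrep y with h | ⟨h₀, h⟩
    · rw [h]; exact isClosed_empty
    · rw [h, Set.image_mul_left]
      exact hKclosed.preimage (continuous_mul_left h₀⁻¹)
  have hCopen : ∀ y : V, IsOpen (C y) := by
    intro y
    rcases hCrep y with h | ⟨h₀, h⟩
    · rw [h]; exact isOpen_empty
    · rw [h]; exact (isOpenMap_mul_left h₀) _ (hopen x)
  -- surjection from ℕ onto V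
  obtain ⟨e, he⟩ := exists_surjective_nat V
  -- main argument
  refine ⟨fun g => ?_⟩
  set μ' : Measure G := Measure.map (· * g) m with hμ'
  haveI : μ'.IsHaarMeasure := by
    rw [hμ']
    infer_instance
  set K : Set G := (stabilizer G x : Set G) with hK
  have hKmeas : MeasurableSet K := (hopen x).measurableSet
  have hμ'K : μ' K = m K := by
    rw [hμ', Measure.map_apply (measurable_mul_const g) hKmeas]
    have hpre : (· * g) ⁻¹' K = (· * g⁻¹) '' K := by
      ext h
      simp only [Set.mem_preimage, Set.mem_image]
      constructor
      · intro hh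
        exact ⟨h * g, hh, by group⟩
      · rintro ⟨k, hk, rfl⟩
        simpa [mul_assoc] using hk
    rw [hpre]
    exact measure_image_mul_right_stab m x hopen horbfin huni g⁻¹
  -- scalar factor is 1
  have hscal : ∀ s : Set G, IsCompact (closure s) →
      μ' s = (Measure.haarScalarFactor μ' m : ℝ≥0∞) * m s := by
    intro s hs
    have := Measure.measure_isMulInvariant_eq_smul_of_isCompact_closure μ' m hs
    rwa [ENNReal.smul_def, smul_eq_mul] at this
  have hKclosure : IsCompact (closure K) := by
    rw [hKclosed.closure_eq]
    exact hcompact x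
  have hK0 : m K ≠ 0 := (hopen x).measure_ne_zero m ⟨1, Subgroup.one_mem _⟩
  have hKtop : m K ≠ ⊤ := (hcompact x).measure_lt_top.ne
  have hc1 : (Measure.haarScalarFactor μ' m : ℝ≥0∞) = 1 := by
    have h := hscal K hKclosure
    rw [hμ'K] at h
    have h' : (Measure.haarScalarFactor μ' m : ℝ≥0∞) * m K = 1 * m K := by
      rw [one_mul, ← h]
    exact (ENNReal.mul_left_inj hK0 hKtop).mp h'
  -- now prove full equality of measures
  have hμ'eq : μ' = m := by
    ext s hs
    set D : ℕ → Set G := disjointed (fun n => s ∩ C (e n)) with hD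
    have hDmeas : ∀ n, MeasurableSet (D n) :=
      MeasurableSet.disjointed fun n => hs.inter (hCopen (e n)).measurableSet
    have hDsub : ∀ n, D n ⊆ C (e n) :=
      fun n => (disjointed_subset _ n).trans Set.inter_subset_right
    have hDval : ∀ n, μ' (D n) = m (D n) := by
      intro n
      have hcl : closure (D n) ⊆ C (e n) := by
        rw [← (hCclosed (e n)).closure_eq]
        exact closure_mono (hDsub n)
      rw [hscal (D n) ((hCcomp (e n)).of_isClosed_subset isClosed_closure hcl), hc1, one_mul]
    have hcover : ⋃ n, s ∩ C (e n) = s := by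
      apply Set.Subset.antisymm
      · exact Set.iUnion_subset fun n => Set.inter_subset_left
      · intro h hh
        obtain ⟨n, hn⟩ := he (h • x)
        exact Set.mem_iUnion.mpr ⟨n, hh, hn.symm ▸ rfl⟩
    have hsD : s = ⋃ n, D n := by
      rw [hD, iUnion_disjointed, hcover]
    rw [hsD, measure_iUnion (disjoint_disjointed _) hDmeas,
      measure_iUnion (disjoint_disjointed _) hDmeas]
    exact tsum_congr hDval
  exact hμ'eq
end
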